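/- Let n_s ≥ 2 and l ≥ 1 be integers with (n_s - 1)·l = n, and let R¹, ..., R^l be pairwise disjoint ordered index sets each of size n_s - 1 partitioning [n]. Define subsets S^i = R^i ∪ {first element of R^{γ(i)}} where γ(i) = 1 + (i mod l). Then the union over i ∈ [l] of the Hamiltonian path edges within each S^i (linking consecutive elements of the ordered set S^i) forms a Hamiltonian cycle on [n]. -/
import Mathlib


/-- Let `ns ≥ 2`, `l ≥ 1` with `(ns-1)·l = n`, and let `R¹, …, R^l` be pairwise
disjoint ordered index sets of size `ns-1` partitioning `[n]`. With
`S^i = R^i ∪ {first element of R^{γ(i)}}`, `γ(i) = 1 + (i mod l)`, the union over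
`i ∈ [l]` of the Hamiltonian-path edges linking consecutive elements of each
ordered `S^i` forms a Hamiltonian cycle on `[n]`. -/
theorem stmt_15 (ns l n : ℕ) (hns : 2 ≤ ns) (hl : 1 ≤ l) (hn : (ns - 1) * l = n)
    (R : Fin l → ℕ → ℕ)
    (hmem : ∀ i : Fin l, ∀ j, j < ns - 1 → R i j ∈ Set.Icc 1 n)
    (hpart : ∀ m ∈ Set.Icc 1 n, ∃! p : Fin l × Fin (ns - 1), R p.1 (p.2 : ℕ) = m)
    (S : Fin l → ℕ → ℕ)
    (hS : ∀ i : Fin l,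
      (∀ j, j < ns - 1 → S i j = R i j) ∧
      S i (ns - 1) = R ⟨((i : ℕ) + 1) % l, Nat.mod_lt _ (by omega)⟩ 0)
    (E : ℕ → ℕ → Prop)
    (hE : ∀ a b, E a b ↔ ∃ i : Fin l, ∃ j : ℕ, j + 1 < ns ∧
      ((S i j = a ∧ S i (j + 1) = b) ∨ (S i j = b ∧ S i (j + 1) = a))) :
    ∃ c : ZMod n → ℕ,
      Set.BijOn c Set.univ (Set.Icc 1 n) ∧
      ∀ a b, E a b ↔ ∃ t : ZMod n,
        (c t = a ∧ c (t + 1) = b) ∨ (c t = b ∧ c (t + 1) = a) := by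
  have hm0 : 0 < ns - 1 := by omega
  set m := ns - 1 with hmdef
  have hnlm : n = l * m := hn.symm.trans (Nat.mul_comm m l)
  have hn0 : 0 < n := by rw [hnlm]; exact Nat.mul_pos hl hm0
  haveI : NeZero n := ⟨by omega⟩
  have hltl : ∀ k, k < n → k / m < l := by
    intro k hk
    rw [hnlm] at hk
    exact (Nat.div_lt_iff_lt_mul hm0).mpr hk
  have hRcongr : ∀ (a b : Fin l) (x y : ℕ), (a : ℕ) = (b : ℕ) → x = y →
      R a x = R b y := by
    intro a b x y h1 h2
    rw [show a = b from Fin.ext h1, h2]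
  set c : ZMod n → ℕ :=
    fun t => R ⟨t.val / m, hltl _ (ZMod.val_lt t)⟩ (t.val % m) with hc
  have keyA : ∀ t : ZMod n,
      c t = S ⟨t.val / m, hltl _ (ZMod.val_lt t)⟩ (t.val % m) ∧
      c (t + 1) = S ⟨t.val / m, hltl _ (ZMod.val_lt t)⟩ (t.val % m + 1) := by
    intro t
    have hk : t.val < n := ZMod.val_lt t
    have hi : t.val / m < l := hltl _ hk
    have hj : t.val % m < m := Nat.mod_lt _ hm0
    have hdm : m * (t.val / m) + t.val % m = t.val := Nat.div_add_mod _ _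
    have hv1 : (t + 1).val = (t.val + 1) % n := by
      rw [ZMod.val_add, ZMod.val_one_eq_one_mod, Nat.add_mod_mod]
    simp only [hc]
    refine ⟨((hS _).1 _ hj).symm, ?_⟩
    by_cases hcase : t.val % m + 1 < m
    · have hlt : t.val + 1 < n := by
        have h1 : m * (t.val / m + 1) ≤ m * l := Nat.mul_le_mul le_rfl hi
        have h2 : m * (t.val / m + 1) = m * (t.val / m) + m := by ring
        have h3 : m * l = n := hn
        omega
      have hdiv : (t + 1).val / m = t.val / m := by
        rw [hv1, Nat.mod_eq_of_lt hlt,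
          show t.val + 1 = m * (t.val / m) + (t.val % m + 1) by omega,
          Nat.mul_add_div hm0, Nat.div_eq_of_lt hcase, Nat.add_zero]
      have hmod : (t + 1).val % m = t.val % m + 1 := by
        rw [hv1, Nat.mod_eq_of_lt hlt,
          show t.val + 1 = m * (t.val / m) + (t.val % m + 1) by omega,
          Nat.mul_add_mod, Nat.mod_eq_of_lt hcase]
      rw [(hS _).1 _ hcase]
      exact hRcongr _ _ _ _ (by simpa using hdiv) hmod
    · have hjm : t.val % m + 1 = m := by omega
      have hkm : t.val + 1 = m * (t.val / m + 1) := by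
        have h2 : m * (t.val / m + 1) = m * (t.val / m) + m := by ring
        omega
      rw [hjm, (hS _).2]
      by_cases hil : t.val / m + 1 < l
      · have hlt : t.val + 1 < n := by
          have h2 := mul_lt_mul_of_pos_left hil hm0
          have h3 : m * l = n := hn
          omega
        have hdiv : (t + 1).val / m = t.val / m + 1 := by
          rw [hv1, Nat.mod_eq_of_lt hlt, hkm, Nat.mul_div_cancel_left _ hm0]
        have hmod : (t + 1).val % m = 0 := by
          rw [hv1, Nat.mod_eq_of_lt hlt, hkm, Nat.mul_mod_right]
        refine hRcongr _ _ _ _ ?_ hmod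
        simp only [Fin.val_mk]
        rw [hdiv, Nat.mod_eq_of_lt hil]
      · have hile : t.val / m + 1 = l := by omega
        have hkn : t.val + 1 = n := by
          rw [hkm, hile]; omega
        have hv0 : (t + 1).val = 0 := by
          rw [hv1, hkn, Nat.mod_self]
        refine hRcongr _ _ _ _ ?_ ?_
        · simp [hv0, hile, Nat.mod_self]
        · simp [hv0]
  have hmapsto : ∀ t : ZMod n, c t ∈ Set.Icc 1 n := by
    intro t
    simp only [hc]
    exact hmem _ _ (Nat.mod_lt _ hm0)
  have hinj : ∀ t1 t2 : ZMod n, c t1 = c t2 → t1 = t2 := by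
    intro t1 t2 h
    obtain ⟨p, hp, hup⟩ := hpart (c t1) (hmapsto t1)
    have e1 := hup (⟨⟨t1.val / m, hltl _ (ZMod.val_lt t1)⟩,
      ⟨t1.val % m, Nat.mod_lt _ hm0⟩⟩) (by simp [hc])
    have e2 := hup (⟨⟨t2.val / m, hltl _ (ZMod.val_lt t2)⟩,
      ⟨t2.val % m, Nat.mod_lt _ hm0⟩⟩) (by rw [h])
    have e3 := e1.trans e2.symm
    have hdiv : t1.val / m = t2.val / m := by
      have := congrArg (fun q : Fin l × Fin m => (q.1 : ℕ)) e3
      simpa using this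
    have hmod : t1.val % m = t2.val % m := by
      have := congrArg (fun q : Fin l × Fin m => (q.2 : ℕ)) e3
      simpa using this
    have hv : t1.val = t2.val := by
      rw [← Nat.div_add_mod t1.val m, ← Nat.div_add_mod t2.val m, hdiv, hmod]
    exact ZMod.val_injective n hv
  have hsurj : ∀ v ∈ Set.Icc 1 n, ∃ t : ZMod n, c t = v := by
    intro v hv
    obtain ⟨p, hp, -⟩ := hpart v hv
    have h3 : (p.2 : ℕ) < m := p.2.isLt
    have hlt : m * (p.1 : ℕ) + (p.2 : ℕ) < n := by
      have h1 : (p.1 : ℕ) + 1 ≤ l := p.1.isLt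
      have h2 : m * ((p.1 : ℕ) + 1) ≤ m * l := Nat.mul_le_mul le_rfl h1
      have h4 : m * ((p.1 : ℕ) + 1) = m * (p.1 : ℕ) + m := by ring
      have h5 : m * l = n := hn
      omega
    refine ⟨((m * (p.1 : ℕ) + (p.2 : ℕ) : ℕ) : ZMod n), ?_⟩
    have hval : (((m * (p.1 : ℕ) + (p.2 : ℕ) : ℕ)) : ZMod n).val
        = m * (p.1 : ℕ) + (p.2 : ℕ) := by
      rw [ZMod.val_natCast, Nat.mod_eq_of_lt hlt]
    simp only [hc]
    rw [← hp]
    refine hRcongr _ _ _ _ ?_ ?_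
    · simp only [Fin.val_mk]
      rw [hval, Nat.mul_add_div hm0, Nat.div_eq_of_lt h3, Nat.add_zero]
    · rw [hval, Nat.mul_add_mod, Nat.mod_eq_of_lt h3]
  refine ⟨c, ⟨fun t _ => hmapsto t, fun t1 _ t2 _ h => hinj t1 t2 h,
    fun v hv => ?_⟩, ?_⟩
  · obtain ⟨t, ht⟩ := hsurj v hv
    exact ⟨t, Set.mem_univ t, ht⟩
  · intro a b
    rw [hE]
    constructor
    · rintro ⟨i, j, hjns, hor⟩
      have hjm : j < m := by omega
      have hklt : m * (i : ℕ) + j < n := by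
        have h1 : (i : ℕ) + 1 ≤ l := i.isLt
        have h2 : m * ((i : ℕ) + 1) ≤ m * l := Nat.mul_le_mul le_rfl h1
        have h4 : m * ((i : ℕ) + 1) = m * (i : ℕ) + m := by ring
        have h5 : m * l = n := hn
        omega
      refine ⟨((m * (i : ℕ) + j : ℕ) : ZMod n), ?_⟩
      have hval : (((m * (i : ℕ) + j : ℕ)) : ZMod n).val = m * (i : ℕ) + j := by
        rw [ZMod.val_natCast, Nat.mod_eq_of_lt hklt]
      have hdiv : (((m * (i : ℕ) + j : ℕ)) : ZMod n).val / m = (i : ℕ) := by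
        rw [hval, Nat.mul_add_div hm0, Nat.div_eq_of_lt hjm, Nat.add_zero]
      have hmod : (((m * (i : ℕ) + j : ℕ)) : ZMod n).val % m = j := by
        rw [hval, Nat.mul_add_mod, Nat.mod_eq_of_lt hjm]
      obtain ⟨h1, h2⟩ := keyA ((m * (i : ℕ) + j : ℕ) : ZMod n)
      have hfin : (⟨(((m * (i : ℕ) + j : ℕ)) : ZMod n).val / m,
          hltl _ (ZMod.val_lt _)⟩ : Fin l) = i := Fin.ext hdiv
      rw [hfin, hmod] at h1 h2
      rcases hor with ⟨ha, hb⟩ | ⟨ha, hb⟩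
      · exact Or.inl ⟨h1.trans ha, h2.trans hb⟩
      · exact Or.inr ⟨h1.trans ha, h2.trans hb⟩
    · rintro ⟨t, hor⟩
      obtain ⟨h1, h2⟩ := keyA t
      have hjm : t.val % m < m := Nat.mod_lt _ hm0
      refine ⟨⟨t.val / m, hltl _ (ZMod.val_lt t)⟩, t.val % m, by omega, ?_⟩
      rcases hor with ⟨ha, hb⟩ | ⟨ha, hb⟩
      · exact Or.inl ⟨h1.symm.trans ha, h2.symm.trans hb⟩
      · exact Or.inr ⟨h1.symm.trans ha, h2.symm.trans hb⟩
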